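/- arXiv:1702.04458 — 2 statements merged into one kernel-verified Lean document; each statement's English description precedes it below -/
import Mathlib

section
/- Projection onto a norm-ball constraint through a surjective affine map: let D ∈ ℂ^{U×(UC)} with DDᴴ = C·I_U, let w ∈ ℂ^{UC}, s ∈ ℂ^U, ε ≥ 0. The unique minimizer of (1/2)‖w - z‖² over z ∈ ℂ^{UC} subject to ‖s - Dz‖ ≤ ε is z* = w + max{0, 1 - ε/‖s - Dw‖}·(1/C)·Dᴴ(s - Dw), interpreted as z* = w when ‖s - Dw‖ ≤ ε. -/
open scoped Matrix ComplexInnerProductSpace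

noncomputable def vecE {ι : Type*} [Fintype ι] (v : ι → ℂ) : EuclideanSpace ℂ ι :=
  (WithLp.equiv 2 (ι → ℂ)).symm v

noncomputable def vecP {ι : Type*} [Fintype ι] (v : EuclideanSpace ℂ ι) : ι → ℂ :=
  WithLp.equiv 2 (ι → ℂ) v

set_option maxHeartbeats 1000000 in
/-- Projection onto `{z : ‖s - Dz‖ ≤ ε}` through a surjective affine map `D`
with `DDᴴ = C·I`: the unique minimizer of `(1/2)‖w - z‖²` is
`z* = w + max{0, 1 - ε/‖s - Dw‖}·(1/C)·Dᴴ(s - Dw)`. -/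
theorem projection_through_surjective_map (C U : ℕ) (hC : 1 ≤ C)
    (D : Matrix (Fin U) (Fin C × Fin U) ℂ)
    (hD : D * Dᴴ = (C : ℂ) • (1 : Matrix (Fin U) (Fin U) ℂ))
    (w : EuclideanSpace ℂ (Fin C × Fin U)) (s : EuclideanSpace ℂ (Fin U))
    (ε : ℝ) (hε : 0 ≤ ε)
    (zstar : EuclideanSpace ℂ (Fin C × Fin U))
    (hz : zstar = w +
        (max 0 (1 - ε / ‖s - vecE (D.mulVec (vecP w))‖) * (C : ℝ)⁻¹) •
          vecE (Dᴴ.mulVec (vecP (s - vecE (D.mulVec (vecP w)))))) :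
    ‖s - vecE (D.mulVec (vecP zstar))‖ ≤ ε ∧
    (∀ z : EuclideanSpace ℂ (Fin C × Fin U),
        ‖s - vecE (D.mulVec (vecP z))‖ ≤ ε →
          1 / 2 * ‖w - zstar‖ ^ 2 ≤ 1 / 2 * ‖w - z‖ ^ 2) ∧
    (∀ z : EuclideanSpace ℂ (Fin C × Fin U),
        ‖s - vecE (D.mulVec (vecP z))‖ ≤ ε →
          ‖w - z‖ = ‖w - zstar‖ → z = zstar) := by
  classical
  have hCpos : (0 : ℝ) < (C : ℝ) := by exact_mod_cast hC
  set f : EuclideanSpace ℂ (Fin C × Fin U) →ₗ[ℂ] EuclideanSpace ℂ (Fin U) :=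
    Matrix.toEuclideanLin D with hf
  set g : EuclideanSpace ℂ (Fin U) →ₗ[ℂ] EuclideanSpace ℂ (Fin C × Fin U) :=
    Matrix.toEuclideanLin Dᴴ with hg
  have hfz : ∀ z, vecE (D.mulVec (vecP z)) = f z := by
    intro z
    simp [vecE, vecP, hf, Matrix.toEuclideanLin_apply]
  have hgz : ∀ z, vecE (Dᴴ.mulVec (vecP z)) = g z := by
    intro z
    simp [vecE, vecP, hg, Matrix.toEuclideanLin_apply]
  have hadj : ∀ (x : EuclideanSpace ℂ (Fin U)) (y : EuclideanSpace ℂ (Fin C × Fin U)),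
      ⟪g x, y⟫ = ⟪x, f y⟫ := by
    intro x y
    rw [hg, Matrix.toEuclideanLin_conjTranspose_eq_adjoint, hf]
    exact LinearMap.adjoint_inner_left _ y x
  have hfg : ∀ x : EuclideanSpace ℂ (Fin U), f (g x) = (C : ℂ) • x := by
    intro x
    rw [hf, hg]
    simp only [Matrix.toEuclideanLin_apply, Equiv.apply_symm_apply]
    rw [Matrix.mulVec_mulVec, hD, Matrix.smul_mulVec, Matrix.one_mulVec]
    rfl
  -- notation
  set r : EuclideanSpace ℂ (Fin U) := s - vecE (D.mulVec (vecP w)) with hr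
  set t : ℝ := max 0 (1 - ε / ‖r‖) with ht
  have ht0 : 0 ≤ t := le_max_left _ _
  have ht1 : t ≤ 1 := by
    apply max_le (by norm_num)
    have : 0 ≤ ε / ‖r‖ := div_nonneg hε (norm_nonneg _)
    linarith
  have hzs : zstar = w + (t * (C : ℝ)⁻¹) • g r := by rw [hz, hgz]
  have hrw : s - f w = r := by rw [hr, hfz]
  -- image of zstar
  have hkey : s - f zstar = ((1 - t : ℝ) : ℂ) • r := by
    rw [hzs, ← Complex.coe_smul, map_add, map_smul, hfg, smul_smul]
    have hc : ((t * (C : ℝ)⁻¹ : ℝ) : ℂ) * (C : ℂ) = ((t : ℝ) : ℂ) := by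
      have hCne : (C : ℂ) ≠ 0 := by
        exact_mod_cast ne_of_gt hCpos
      push_cast
      rw [mul_assoc, inv_mul_cancel₀ hCne, mul_one]
    rw [hc]
    have h2 : s - (f w + ((t : ℝ) : ℂ) • r) = r - ((t : ℝ) : ℂ) • r := by
      rw [← hrw]; abel
    rw [h2]
    push_cast
    rw [sub_smul, one_smul]
  have hnorm_szstar : ‖s - f zstar‖ = (1 - t) * ‖r‖ := by
    rw [hkey, norm_smul, Complex.norm_real, Real.norm_eq_abs, abs_of_nonneg (by linarith : (0:ℝ) ≤ 1 - t)]
  -- feasibility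
  have hfeas : ‖s - f zstar‖ ≤ ε := by
    rw [hnorm_szstar]
    rcases le_or_gt ‖r‖ ε with h | h
    · calc (1 - t) * ‖r‖ ≤ 1 * ‖r‖ :=
            mul_le_mul_of_nonneg_right (by linarith) (norm_nonneg _)
        _ = ‖r‖ := one_mul _
        _ ≤ ε := h
    · have hrpos : 0 < ‖r‖ := lt_of_le_of_lt hε h
      have htval : t = 1 - ε / ‖r‖ := by
        rw [ht, max_eq_right]
        have h1 : ε / ‖r‖ ≤ 1 := by
          rw [div_le_one hrpos]; linarith
        linarith [div_nonneg hε (le_of_lt hrpos)]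
      rw [htval]
      field_simp
      linarith
  -- variational inequality
  have hvar : ∀ z : EuclideanSpace ℂ (Fin C × Fin U),
      ‖s - vecE (D.mulVec (vecP z))‖ ≤ ε →
      0 ≤ RCLike.re ⟪w - zstar, zstar - z⟫ := by
    intro z hzfeas
    rw [hfz] at hzfeas
    have h1 : w - zstar = (-(t * (C : ℝ)⁻¹) : ℝ) • g r := by
      rw [hzs, neg_smul]; abel
    have h2 : ⟪((-(t * (C : ℝ)⁻¹) : ℝ)) • g r, zstar - z⟫
        = (-(t * (C : ℝ)⁻¹) : ℝ) • ⟪g r, zstar - z⟫ := by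
      rw [← inner_smul_real_left]
      norm_cast
    rw [h1, h2, hadj, map_sub]
    have hinner : ⟪r, f zstar - f z⟫ = ⟪r, s - f z⟫ - ⟪r, s - f zstar⟫ := by
      rw [← inner_sub_right]
      congr 1
      abel
    rw [hinner, hkey, inner_smul_right]
    have hre : RCLike.re ((-(t * (C : ℝ)⁻¹) : ℝ) •
        (⟪r, s - f z⟫ - ((1 - t : ℝ) : ℂ) * ⟪r, r⟫))
        = -(t * (C : ℝ)⁻¹) * (RCLike.re ⟪r, s - f z⟫ - (1 - t) * ‖r‖ ^ 2) := by
      rw [RCLike.smul_re, map_sub, ← Complex.real_smul, RCLike.smul_re,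
        inner_self_eq_norm_sq]
    rw [hre]
    have hb : RCLike.re ⟪r, s - f z⟫ ≤ ‖r‖ * ε := by
      calc RCLike.re ⟪r, s - f z⟫ ≤ ‖r‖ * ‖s - f z‖ := re_inner_le_norm r _
        _ ≤ ‖r‖ * ε := mul_le_mul_of_nonneg_left hzfeas (norm_nonneg _)
    rcases eq_or_lt_of_le ht0 with h0 | h0
    · rw [← h0]; norm_num
    · have hmain : RCLike.re ⟪r, s - f z⟫ - (1 - t) * ‖r‖ ^ 2 ≤ 0 := by
        rcases eq_or_lt_of_le (norm_nonneg r) with hr0 | hrpos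
        · have hb0 : RCLike.re ⟪r, s - f z⟫ ≤ 0 := by
            calc RCLike.re ⟪r, s - f z⟫ ≤ ‖r‖ * ‖s - f z‖ := re_inner_le_norm r _
              _ = 0 := by rw [← hr0]; ring
          rw [← hr0]
          rw [show ((0:ℝ)) ^ 2 = 0 by norm_num, mul_zero, sub_zero]
          exact hb0
        · have htpos : (0:ℝ) < 1 - ε / ‖r‖ := by
            by_contra hcon
            push_neg at hcon
            have : t = 0 := by rw [ht, max_eq_left hcon]
            linarith
          have htval : t = 1 - ε / ‖r‖ := by
            rw [ht, max_eq_right (le_of_lt htpos)]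
          have hA : (1 - t) * ‖r‖ ^ 2 = ε * ‖r‖ := by
            rw [htval]
            field_simp
            ring
          rw [hA]
          linarith [hb]
      have hnn : 0 ≤ t * (C : ℝ)⁻¹ := mul_nonneg ht0 (le_of_lt (inv_pos.mpr hCpos))
      have h5 := mul_nonneg hnn (neg_nonneg.mpr hmain)
      rw [mul_neg] at h5
      rw [neg_mul]
      linarith
  -- main estimate
  have hest : ∀ z : EuclideanSpace ℂ (Fin C × Fin U),
      ‖s - vecE (D.mulVec (vecP z))‖ ≤ ε →
      ‖w - zstar‖ ^ 2 + ‖zstar - z‖ ^ 2 ≤ ‖w - z‖ ^ 2 := by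
    intro z hzfeas
    have hsplit : w - z = (w - zstar) + (zstar - z) := by abel
    have hsq := norm_add_sq (𝕜 := ℂ) (w - zstar) (zstar - z)
    rw [← hsplit] at hsq
    have hv := hvar z hzfeas
    rw [hsq]
    linarith
  refine ⟨by rw [hfz]; exact hfeas, ?_, ?_⟩
  · intro z hzfeas
    have := hest z hzfeas
    linarith [sq_nonneg ‖zstar - z‖]
  · intro z hzfeas hnorm
    have h := hest z hzfeas
    rw [hnorm] at h
    have h2 : ‖zstar - z‖ ^ 2 ≤ 0 := by linarith
    have h2' : ‖zstar - z‖ ^ 2 = 0 := le_antisymm h2 (sq_nonneg _)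
    have hzz : ‖zstar - z‖ = 0 := by
      exact pow_eq_zero_iff (by norm_num) |>.mp h2'
    have h3 := norm_eq_zero.mp hzz
    have h4 := sub_eq_zero.mp h3
    exact h4.symm
end

section
/- Block form of the projection (Lemma 2 of the paper): with w = (w_1,...,w_C), w_c ∈ ℂ^U, v = (1/C)∑_c w_c, s ∈ ℂ^U, and ε ≥ 0, the projection of w onto {z = (z_1,...,z_C) : ‖s - ∑_c z_c‖ ≤ ε} has blocks z*_c = w_c + max{0, 1 - ε/‖s - Cv‖}·((1/C)s - v) when ‖s - Cv‖ > ε, and z*_c = w_c otherwise. -/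
open scoped BigOperators

/-- Block form of the projection (Lemma 2): the Euclidean projection of
`(w_1,…,w_C)` onto `{(z_1,…,z_C) : ‖s - ∑ z_c‖ ≤ ε}` has blocks
`z*_c = w_c + max{0, 1 - ε/‖s - Cv‖}·((1/C)s - v)` when `‖s - Cv‖ > ε`,
and `z*_c = w_c` otherwise, where `v = (1/C)∑ w_c`. -/
theorem block_projection_formula (C U : ℕ) (hC : 1 ≤ C)
    (w : Fin C → EuclideanSpace ℂ (Fin U)) (s : EuclideanSpace ℂ (Fin U))
    (ε : ℝ) (hε : 0 ≤ ε)
    (v : EuclideanSpace ℂ (Fin U)) (hv : v = (C : ℝ)⁻¹ • ∑ c, w c)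
    (zstar : Fin C → EuclideanSpace ℂ (Fin U))
    (hz : ∀ c, zstar c =
        if ε < ‖s - (C : ℝ) • v‖ then
          w c + max 0 (1 - ε / ‖s - (C : ℝ) • v‖) • ((C : ℝ)⁻¹ • s - v)
        else w c) :
    ‖s - ∑ c, zstar c‖ ≤ ε ∧
    (∀ z : Fin C → EuclideanSpace ℂ (Fin U),
        ‖s - ∑ c, z c‖ ≤ ε →
          ‖(WithLp.equiv 2 (∀ _ : Fin C, EuclideanSpace ℂ (Fin U))).symm
              (fun c => w c - zstar c)‖ ≤
            ‖(WithLp.equiv 2 (∀ _ : Fin C, EuclideanSpace ℂ (Fin U))).symm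
              (fun c => w c - z c)‖) ∧
    (∀ z : Fin C → EuclideanSpace ℂ (Fin U),
        ‖s - ∑ c, z c‖ ≤ ε →
          ‖(WithLp.equiv 2 (∀ _ : Fin C, EuclideanSpace ℂ (Fin U))).symm
              (fun c => w c - z c)‖ =
            ‖(WithLp.equiv 2 (∀ _ : Fin C, EuclideanSpace ℂ (Fin U))).symm
              (fun c => w c - zstar c)‖ → z = zstar) := by
  have hC0 : (C : ℝ) ≠ 0 := Nat.cast_ne_zero.mpr (by omega)
  have hCpos : (0 : ℝ) < C := by positivity
  have hCv : (C : ℝ) • v = ∑ c, w c := by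
    rw [hv, smul_smul, mul_inv_cancel₀ hC0, one_smul]
  set d : EuclideanSpace ℂ (Fin U) := s - (C : ℝ) • v with hd
  set D := ‖d‖ with hD
  -- parts 1 and 2
  have key : ‖s - ∑ c, zstar c‖ ≤ ε ∧
      (∀ z : Fin C → EuclideanSpace ℂ (Fin U),
        ‖s - ∑ c, z c‖ ≤ ε →
          ‖(WithLp.equiv 2 (∀ _ : Fin C, EuclideanSpace ℂ (Fin U))).symm
              (fun c => w c - zstar c)‖ ≤
            ‖(WithLp.equiv 2 (∀ _ : Fin C, EuclideanSpace ℂ (Fin U))).symm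
              (fun c => w c - z c)‖) := by
    by_cases h : ε < D
    · -- the nontrivial case
      have hD0 : 0 < D := lt_of_le_of_lt hε h
      set t : ℝ := 1 - ε / D with ht
      have ht0 : 0 < t := by
        have : ε / D < 1 := (div_lt_one hD0).mpr h
        simp only [ht]; linarith
      have hmax : max 0 (1 - ε / D) = t := max_eq_right ht0.le
      have hsv : (C : ℝ)⁻¹ • s - v = (C : ℝ)⁻¹ • d := by
        rw [hd, smul_sub, smul_smul, inv_mul_cancel₀ hC0, one_smul]
      have hzc : ∀ c, zstar c = w c + (t * (C : ℝ)⁻¹) • d := by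
        intro c
        rw [hz c, if_pos h, hmax, hsv, smul_smul]
      have hswd : s - ∑ c, w c = d := by rw [← hCv, hd]
      have hsum : ∑ c, zstar c = (∑ c, w c) + t • d := by
        simp only [hzc, Finset.sum_add_distrib, Finset.sum_const, Finset.card_univ,
          Fintype.card_fin]
        congr 1
        rw [← Nat.cast_smul_eq_nsmul ℝ, smul_smul]
        congr 1
        field_simp
      have hresid : s - ∑ c, zstar c = (ε / D) • d := by
        have h1 : s - ∑ c, zstar c = (s - ∑ c, w c) - t • d := by rw [hsum]; abel
        rw [h1, hswd, ht]
        module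
      have hnd : ‖(ε / D) • d‖ = ε := by
        rw [norm_smul, Real.norm_eq_abs, abs_of_nonneg (div_nonneg hε hD0.le), ← hD,
          div_mul_cancel₀ ε hD0.ne']
      constructor
      · rw [hresid, hnd]
      · intro z hzf
        -- squared norms
        have hLsq : ‖(WithLp.equiv 2 (∀ _ : Fin C, EuclideanSpace ℂ (Fin U))).symm
            (fun c => w c - zstar c)‖ ^ 2 = (C : ℝ) * (t * (C : ℝ)⁻¹ * D) ^ 2 := by
          rw [PiLp.norm_sq_eq_of_L2]
          have hpt : ∀ c, ‖w c - zstar c‖ = t * (C : ℝ)⁻¹ * D := by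
            intro c
            have : w c - zstar c = -((t * (C : ℝ)⁻¹) • d) := by rw [hzc c]; abel
            rw [this, norm_neg, norm_smul, Real.norm_eq_abs,
              abs_of_nonneg (by positivity), ← hD]
          simp only [WithLp.equiv_symm_apply, PiLp.toLp_apply, hpt]
          rw [Finset.sum_const, Finset.card_univ, Fintype.card_fin, nsmul_eq_mul]
        have hRsq : ‖(WithLp.equiv 2 (∀ _ : Fin C, EuclideanSpace ℂ (Fin U))).symm
            (fun c => w c - z c)‖ ^ 2 = ∑ c, ‖w c - z c‖ ^ 2 := by
          rw [PiLp.norm_sq_eq_of_L2]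
          simp only [WithLp.equiv_symm_apply, PiLp.toLp_apply]
        -- lower bound on the sum of norms
        have hXsum : (s - ∑ c, z c) - ∑ c, (w c - z c) = d := by
          rw [Finset.sum_sub_distrib, ← hswd]; abel
        have hlow : t * D ≤ ‖∑ c, (w c - z c)‖ := by
          have h1 : D ≤ ε + ‖∑ c, (w c - z c)‖ := by
            calc D = ‖(s - ∑ c, z c) - ∑ c, (w c - z c)‖ := by rw [hXsum]
              _ ≤ ‖s - ∑ c, z c‖ + ‖∑ c, (w c - z c)‖ := norm_sub_le _ _
              _ ≤ ε + ‖∑ c, (w c - z c)‖ := by linarith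
          have h2 : t * D = D - ε := by rw [ht]; field_simp
          linarith
        have hCS : ‖∑ c, (w c - z c)‖ ≤ ∑ c, ‖w c - z c‖ := norm_sum_le _ _
        have hChe : (∑ c, ‖w c - z c‖) ^ 2 ≤ (C : ℝ) * ∑ c, ‖w c - z c‖ ^ 2 := by
          have := sq_sum_le_card_mul_sum_sq
            (s := (Finset.univ : Finset (Fin C))) (f := fun c => ‖w c - z c‖)
          simpa using this
        have hsqle : ‖(WithLp.equiv 2 (∀ _ : Fin C, EuclideanSpace ℂ (Fin U))).symm
            (fun c => w c - zstar c)‖ ^ 2 ≤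
            ‖(WithLp.equiv 2 (∀ _ : Fin C, EuclideanSpace ℂ (Fin U))).symm
            (fun c => w c - z c)‖ ^ 2 := by
          rw [hLsq, hRsq]
          have hid : (C : ℝ) * (t * (C : ℝ)⁻¹ * D) = t * D := by field_simp
          have h1 : (C : ℝ) * ((C : ℝ) * (t * (C : ℝ)⁻¹ * D) ^ 2) ≤
              (C : ℝ) * ∑ c, ‖w c - z c‖ ^ 2 := by
            calc (C : ℝ) * ((C : ℝ) * (t * (C : ℝ)⁻¹ * D) ^ 2)
                = ((C : ℝ) * (t * (C : ℝ)⁻¹ * D)) ^ 2 := by ring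
              _ = (t * D) ^ 2 := by rw [hid]
              _ ≤ (∑ c, ‖w c - z c‖) ^ 2 := by
                  apply pow_le_pow_left₀ (by positivity) (le_trans hlow hCS)
              _ ≤ (C : ℝ) * ∑ c, ‖w c - z c‖ ^ 2 := hChe
          exact le_of_mul_le_mul_left h1 hCpos
        have := Real.sqrt_le_sqrt hsqle
        rwa [Real.sqrt_sq (norm_nonneg _), Real.sqrt_sq (norm_nonneg _)] at this
    · -- trivial case: zstar = w
      have hzc : ∀ c, zstar c = w c := fun c => by rw [hz c, if_neg h]
      constructor
      · simp only [hzc]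
        rw [← hCv]
        exact not_lt.mp h
      · intro z hzf
        have h0 : (fun c => w c - zstar c) = fun _ : Fin C => (0 : EuclideanSpace ℂ (Fin U)) :=
          funext fun c => by rw [hzc c, sub_self]
        rw [h0]
        have : (WithLp.equiv 2 (∀ _ : Fin C, EuclideanSpace ℂ (Fin U))).symm
            (fun _ : Fin C => (0 : EuclideanSpace ℂ (Fin U))) = 0 := rfl
        rw [this, norm_zero]
        exact norm_nonneg _
  refine ⟨key.1, key.2, ?_⟩
  -- uniqueness via the parallelogram law
  intro z hzf hnorm
  set A := (WithLp.equiv 2 (∀ _ : Fin C, EuclideanSpace ℂ (Fin U))).symm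
    (fun c => w c - z c) with hA
  set B := (WithLp.equiv 2 (∀ _ : Fin C, EuclideanSpace ℂ (Fin U))).symm
    (fun c => w c - zstar c) with hB
  set mfn : Fin C → EuclideanSpace ℂ (Fin U) := fun c => (2 : ℝ)⁻¹ • (z c + zstar c) with hm
  have hmsum : ∑ c, mfn c = (2 : ℝ)⁻¹ • ((∑ c, z c) + ∑ c, zstar c) := by
    rw [← Finset.smul_sum, Finset.sum_add_distrib]
  have hmfeas : ‖s - ∑ c, mfn c‖ ≤ ε := by
    have hrw : s - ∑ c, mfn c = (2 : ℝ)⁻¹ • ((s - ∑ c, z c) + (s - ∑ c, zstar c)) := by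
      rw [hmsum]; module
    rw [hrw, norm_smul, Real.norm_eq_abs]
    have := norm_add_le (s - ∑ c, z c) (s - ∑ c, zstar c)
    have hb : ‖(s - ∑ c, z c) + (s - ∑ c, zstar c)‖ ≤ 2 * ε := by
      have := key.1
      linarith
    rw [abs_of_nonneg (by norm_num : (0:ℝ) ≤ (2:ℝ)⁻¹)]
    linarith
  have hmin := key.2 mfn hmfeas
  have hAB1 : A + B = (2 : ℝ) • (WithLp.equiv 2 (∀ _ : Fin C, EuclideanSpace ℂ (Fin U))).symm
      (fun c => w c - mfn c) := by
    refine PiLp.ext fun c => ?_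
    show (w c - z c) + (w c - zstar c) = (2 : ℝ) • (w c - (2 : ℝ)⁻¹ • (z c + zstar c))
    module
  have h2 : 2 * ‖B‖ ≤ ‖A + B‖ := by
    rw [hAB1, norm_smul, Real.norm_ofNat]
    linarith [hmin]
  have hpar := parallelogram_law_with_norm ℂ A B
  rw [hnorm] at hpar
  have hp : 2 * ‖B‖ * (2 * ‖B‖) ≤ ‖A + B‖ * ‖A + B‖ :=
    mul_self_le_mul_self (by positivity) h2
  have hq : ‖A - B‖ * ‖A - B‖ = 0 :=
    le_antisymm (by linarith) (mul_self_nonneg _)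
  have hABeq : A = B := sub_eq_zero.mp (norm_eq_zero.mp (mul_self_eq_zero.mp hq))
  funext c
  have hc : w c - z c = w c - zstar c := by
    have := congrFun (congrArg WithLp.ofLp hABeq) c; exact this
  exact sub_right_injective hc
end
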